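/- Let E be a real inner product space and consider SoftPull iterates on a probability space as follows: random vectors w^{r,m}_k and g^{r,m}_k (r ≥ 0, 0 ≤ m ≤ M−1, 1 ≤ k ≤ K, K ≥ 2, M ≥ 1) with w^{0,0}_k = w₀ deterministic and identical for all k, w^{r,m+1}_k = w^{r,m}_k − η·g^{r,m}_k, and w^{r+1,0}_k = λ'·w^{r,M}_k + (1−λ')·w̄^{r,M}, where λ' = (Kλ−1)/(K−1) ∈ [0,1), λ ∈ [1/K, 1), and bars denote uniform averages over k. If (1/K)·Σ_{k=1}^K E‖g^{r',m}_k‖² ≤ 2(G² + σ²) for all r' ≤ r and all m, then (1/K)·Σ_{k=1}^K E‖w^{r+1,0}_k − w^{r,M}_k‖² ≤ (1 − (λ')^{r+1})²·2M²(G² + σ²)η². -/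

import Mathlib

open MeasureTheory Finset

private lemma aux_cs {E : Type*} [NormedAddCommGroup E] [InnerProductSpace ℝ E]
    (n : ℕ) (a : ℕ → ℝ) (ha : ∀ j, 0 ≤ a j) (x : ℕ → E) :
    ‖∑ j ∈ range n, a j • x j‖ ^ 2 ≤
      (∑ j ∈ range n, a j) * ∑ j ∈ range n, a j * ‖x j‖ ^ 2 := by
  have h1 : ‖∑ j ∈ range n, a j • x j‖ ≤ ∑ j ∈ range n, a j * ‖x j‖ := by
    refine (norm_sum_le _ _).trans_eq (Finset.sum_congr rfl fun j _ => ?_)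
    rw [norm_smul, Real.norm_of_nonneg (ha j)]
  have h2 : (∑ j ∈ range n, a j * ‖x j‖) ^ 2 ≤
      (∑ j ∈ range n, a j) * ∑ j ∈ range n, a j * ‖x j‖ ^ 2 := by
    calc (∑ j ∈ range n, a j * ‖x j‖)^2
        = (∑ j ∈ range n, Real.sqrt (a j) * (Real.sqrt (a j) * ‖x j‖))^2 := by
          congr 1; refine Finset.sum_congr rfl fun j _ => ?_
          rw [← mul_assoc, Real.mul_self_sqrt (ha j)]
      _ ≤ (∑ j ∈ range n, Real.sqrt (a j)^2) * ∑ j ∈ range n, (Real.sqrt (a j) * ‖x j‖)^2 :=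
          Finset.sum_mul_sq_le_sq_mul_sq _ _ _
      _ = _ := by
          congr 1
          · exact Finset.sum_congr rfl fun j _ => Real.sq_sqrt (ha j)
          · refine Finset.sum_congr rfl fun j _ => ?_
            rw [mul_pow, Real.sq_sqrt (ha j)]
  calc ‖∑ j ∈ range n, a j • x j‖ ^ 2 ≤ (∑ j ∈ range n, a j * ‖x j‖)^2 :=
        pow_le_pow_left₀ (norm_nonneg _) h1 2
    _ ≤ _ := h2

private lemma aux_avg {E : Type*} [AddCommGroup E] [Module ℝ E]
    {K : ℕ} (hK : (K:ℝ) ≠ 0) (y : E) : (1/(K:ℝ)) • ∑ _k : Fin K, y = y := by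
  rw [Finset.sum_const, Finset.card_univ, Fintype.card_fin,
      ← Nat.cast_smul_eq_nsmul ℝ, smul_smul, one_div, inv_mul_cancel₀ hK, one_smul]

private lemma aux_var {E : Type*} [NormedAddCommGroup E] [InnerProductSpace ℝ E]
    {K : ℕ} (hK : (K:ℝ) ≠ 0) (x : Fin K → E) :
    ∑ k, ‖x k - (1/(K:ℝ)) • ∑ k', x k'‖ ^ 2 ≤ ∑ k, ‖x k‖ ^ 2 := by
  set m := (1/(K:ℝ)) • ∑ k', x k' with hm
  have hsum : ∑ k, x k = (K:ℝ) • m := by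
    rw [hm, smul_smul]
    rw [mul_one_div, div_self hK, one_smul]
  have key : ∑ k, ‖x k - m‖^2 = (∑ k, ‖x k‖^2) - (K:ℝ) * ‖m‖^2 := by
    have h1 : ∑ k : Fin K, (inner ℝ (x k) m : ℝ) = (K:ℝ) * ‖m‖^2 := by
      rw [← sum_inner, hsum, real_inner_smul_left, real_inner_self_eq_norm_sq]
    calc ∑ k, ‖x k - m‖^2 = ∑ k : Fin K, (‖x k‖^2 - 2 * inner ℝ (x k) m + ‖m‖^2) :=
          Finset.sum_congr rfl fun k _ => norm_sub_sq_real (x k) m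
      _ = (∑ k, ‖x k‖^2) - 2 * ((K:ℝ)*‖m‖^2) + (K:ℝ) * ‖m‖^2 := by
          rw [Finset.sum_add_distrib, Finset.sum_sub_distrib, ← Finset.mul_sum, h1,
              Finset.sum_const, Finset.card_univ, Fintype.card_fin, nsmul_eq_mul]
      _ = _ := by ring
  have hnn : 0 ≤ (K:ℝ) * ‖m‖^2 := by positivity
  linarith [key]

private lemma aux_mix {E : Type*} [AddCommGroup E] [Module ℝ E] {K : ℕ} (hK : (K:ℝ) ≠ 0)
    (c : ℝ) (x : Fin K → E) (k : Fin K) :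
    (c • x k + (1-c) • ((1/(K:ℝ)) • ∑ k', x k')) -
      (1/(K:ℝ)) • ∑ k', (c • x k' + (1-c) • ((1/(K:ℝ)) • ∑ k'', x k'')) =
      c • (x k - (1/(K:ℝ)) • ∑ k', x k') := by
  rw [Finset.sum_add_distrib, smul_add, ← Finset.smul_sum, aux_avg hK, smul_comm ((1:ℝ)/K) c]
  module

private lemma aux_disp {E : Type*} [AddCommGroup E] [Module ℝ E] {K : ℕ}
    (c : ℝ) (x : Fin K → E) (k : Fin K) :
    (c • x k + (1-c) • ((1/(K:ℝ)) • ∑ k', x k')) - x k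
    = -((1-c) • (x k - (1/(K:ℝ)) • ∑ k', x k')) := by module

private lemma aux_lin {E : Type*} [AddCommGroup E] [Module ℝ E] {K : ℕ} (η : ℝ)
    (y S : Fin K → E) (k : Fin K) :
    (y k - η • S k) - (1/(K:ℝ)) • ∑ k', (y k' - η • S k') =
      (y k - (1/(K:ℝ)) • ∑ k', y k') - η • (S k - (1/(K:ℝ)) • ∑ k', S k') := by
  rw [Finset.sum_sub_distrib, ← Finset.smul_sum]
  module
/-- Expected squared SoftPull mixing displacement: with `λ' = (Kλ−1)/(K−1)` and
`λ ∈ [1/K, 1)`, `(1/K)·Σ_k E‖w^{r+1,0}_k − w^{r,M}_k‖² ≤ (1 − (λ')^{r+1})²·2M²(G²+σ²)η²`. -/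
theorem stmt_5 {E : Type*} [NormedAddCommGroup E] [InnerProductSpace ℝ E]
    {Ω : Type*} [MeasurableSpace Ω] (μ : Measure Ω) [IsProbabilityMeasure μ]
    (K M : ℕ) (hK : 2 ≤ K) (hM : 1 ≤ M) (lam η G σ : ℝ) (hη : 0 < η)
    (hlam0 : 1 / (K : ℝ) ≤ lam) (hlam1 : lam < 1) (w₀ : E)
    (w g : ℕ → ℕ → Fin K → Ω → E)
    (hinit : ∀ k ω, w 0 0 k ω = w₀)
    (hlocal : ∀ r, ∀ m < M, ∀ k ω, w r (m + 1) k ω = w r m k ω - η • g r m k ω)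
    (hmix : ∀ r k ω, w (r + 1) 0 k ω =
      (((K : ℝ) * lam - 1) / ((K : ℝ) - 1)) • w r M k ω +
        (1 - ((K : ℝ) * lam - 1) / ((K : ℝ) - 1)) • ((1 / (K : ℝ)) • ∑ k', w r M k' ω))
    (r : ℕ)
    (hgI : ∀ r' ≤ r, ∀ m < M, ∀ k, Integrable (fun ω => ‖g r' m k ω‖ ^ 2) μ)
    (hdispI : ∀ k, Integrable (fun ω => ‖w (r + 1) 0 k ω - w r M k ω‖ ^ 2) μ)
    (hbound : ∀ r' ≤ r, ∀ m < M,
      (1 / (K : ℝ)) * ∑ k, ∫ ω, ‖g r' m k ω‖ ^ 2 ∂μ ≤ 2 * (G ^ 2 + σ ^ 2)) :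
    (1 / (K : ℝ)) * ∑ k, ∫ ω, ‖w (r + 1) 0 k ω - w r M k ω‖ ^ 2 ∂μ ≤
      (1 - (((K : ℝ) * lam - 1) / ((K : ℝ) - 1)) ^ (r + 1)) ^ 2 *
        (2 * M ^ 2 * (G ^ 2 + σ ^ 2) * η ^ 2) := by
  have hK0 : (0:ℝ) < (K:ℝ) := by exact_mod_cast (by omega : 0 < K)
  have hKne : (K:ℝ) ≠ 0 := ne_of_gt hK0
  have hK2 : (2:ℝ) ≤ (K:ℝ) := by exact_mod_cast hK
  have hK1 : (0:ℝ) < (K:ℝ) - 1 := by linarith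
  set c : ℝ := ((K : ℝ) * lam - 1) / ((K : ℝ) - 1) with hcdef
  have hc0 : 0 ≤ c := by
    apply div_nonneg _ (le_of_lt hK1)
    have h := mul_le_mul_of_nonneg_left hlam0 hK0.le
    rw [mul_one_div, div_self hKne] at h
    linarith
  have hc1 : c < 1 := by
    rw [hcdef, div_lt_one hK1]
    nlinarith [mul_lt_mul_of_pos_left hlam1 hK0]
  have h1c : (0:ℝ) < 1 - c := by linarith
  set S : ℕ → Fin K → Ω → E := fun j k ω => ∑ m ∈ range M, g j m k ω with hSdef
  set T : ℕ → Fin K → Ω → E :=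
    fun j k ω => η • ((1/(K:ℝ)) • (∑ k', S j k' ω) - S j k ω) with hTdef
  have hA : ∀ j k ω, w j M k ω = w j 0 k ω - η • S j k ω := by
    have key : ∀ j k ω m, m ≤ M → w j m k ω = w j 0 k ω - η • ∑ i ∈ range m, g j i k ω := by
      intro j k ω m
      induction m with
      | zero => intro _; simp
      | succ m ih =>
        intro hm
        have hm' : m < M := lt_of_lt_of_le (Nat.lt_succ_self m) hm
        rw [hlocal j m hm' k ω, ih (le_of_lt hm'), Finset.sum_range_succ, smul_add]
        abel
    intro j k ω; exact key j k ω M le_rfl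
  have hB : ∀ j k ω, w j M k ω - (1/(K:ℝ)) • ∑ k', w j M k' ω
      = ∑ i ∈ range (j+1), c^(j-i) • T i k ω := by
    intro j
    induction j with
    | zero =>
      intro k ω
      have e : ∀ k', w 0 M k' ω = w 0 0 k' ω - η • S 0 k' ω := fun k' => hA 0 k' ω
      have hl := aux_lin (K := K) η (fun k' => w 0 0 k' ω) (fun k' => S 0 k' ω) k
      beta_reduce at hl
      rw [e k, Finset.sum_congr rfl (fun k' _ => e k'), hl]
      have e0 : ∀ k', w 0 0 k' ω = w₀ := fun k' => hinit k' ω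
      rw [e0 k, Finset.sum_congr rfl (fun k' _ => e0 k'), aux_avg hKne]
      simp only [zero_add, Finset.sum_range_one, Nat.sub_self, Nat.sub_zero, pow_zero, one_smul, hTdef]
      beta_reduce
      module
    | succ j ih =>
      intro k ω
      have e : ∀ k', w (j+1) M k' ω = w (j+1) 0 k' ω - η • S (j+1) k' ω :=
        fun k' => hA (j+1) k' ω
      have hl := aux_lin (K := K) η (fun k' => w (j+1) 0 k' ω) (fun k' => S (j+1) k' ω) k
      beta_reduce at hl
      rw [e k, Finset.sum_congr rfl (fun k' _ => e k'), hl]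
      have em : ∀ k', w (j+1) 0 k' ω =
          c • w j M k' ω + (1-c) • ((1/(K:ℝ)) • ∑ k'', w j M k'' ω) := fun k' => hmix j k' ω
      have hmx := aux_mix hKne c (fun k' => w j M k' ω) k
      beta_reduce at hmx
      rw [em k, Finset.sum_congr rfl (fun k' _ => em k'), hmx, ih k ω]
      have hterm : ∀ i ∈ range (j+1), c^(j+1-i) • T i k ω = c • (c^(j-i) • T i k ω) := by
        intro i hi
        have hij : i ≤ j := Nat.lt_succ_iff.mp (Finset.mem_range.mp hi)
        have hpow : c^(j+1-i) = c * c^(j-i) := by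
          rw [← pow_succ']
          congr 1
          omega
        rw [hpow, ← smul_smul]
      conv_rhs => rw [Finset.sum_range_succ, Finset.sum_congr rfl hterm, ← Finset.smul_sum,
        Nat.sub_self, pow_zero, one_smul]
      simp only [hTdef]
      beta_reduce
      module
  set A : ℝ := ∑ i ∈ range (r+1), c^i with hAdef
  have hArefl : ∑ i ∈ range (r+1), c^(r-i) = A := by
    rw [hAdef, ← Finset.sum_range_reflect]
    refine Finset.sum_congr rfl fun i hi => ?_
    have := Finset.mem_range.mp hi
    congr 1
    omega
  have hAnn : 0 ≤ A := Finset.sum_nonneg fun i _ => pow_nonneg hc0 i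
  have hgeom : (1 - c) * A = 1 - c^(r+1) := by
    have h := geom_sum_mul c (r+1)
    rw [hAdef]
    linear_combination -h
  have hpt : ∀ ω, ∑ k, ‖w r M k ω - (1/(K:ℝ)) • ∑ k', w r M k' ω‖^2 ≤
      A * ∑ i ∈ range (r+1), c^(r-i) *
        (η^2 * M * ∑ k, ∑ m ∈ range M, ‖g i m k ω‖^2) := by
    intro ω
    have step1 : ∀ k : Fin K, ‖w r M k ω - (1/(K:ℝ)) • ∑ k', w r M k' ω‖^2 ≤
        A * ∑ i ∈ range (r+1), c^(r-i) * ‖T i k ω‖^2 := by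
      intro k
      rw [hB r k ω, ← hArefl]
      exact aux_cs (r+1) (fun i => c^(r-i)) (fun i => pow_nonneg hc0 _) (fun i => T i k ω)
    calc ∑ k, ‖w r M k ω - (1/(K:ℝ)) • ∑ k', w r M k' ω‖^2
        ≤ ∑ k : Fin K, A * ∑ i ∈ range (r+1), c^(r-i) * ‖T i k ω‖^2 :=
          Finset.sum_le_sum fun k _ => step1 k
      _ = A * ∑ i ∈ range (r+1), c^(r-i) * ∑ k, ‖T i k ω‖^2 := by
          rw [← Finset.mul_sum, Finset.sum_comm]
          congr 1
          exact Finset.sum_congr rfl fun i _ => by rw [Finset.mul_sum]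
      _ ≤ A * ∑ i ∈ range (r+1), c^(r-i) * (η^2 * M * ∑ k, ∑ m ∈ range M, ‖g i m k ω‖^2) := by
          apply mul_le_mul_of_nonneg_left _ hAnn
          apply Finset.sum_le_sum
          intro i _
          apply mul_le_mul_of_nonneg_left _ (pow_nonneg hc0 _)
          have t1 : ∀ k : Fin K, ‖T i k ω‖^2 =
              η^2 * ‖S i k ω - (1/(K:ℝ)) • (∑ k', S i k' ω)‖^2 := by
            intro k
            rw [hTdef]
            rw [norm_smul, ← norm_neg ((1/(K:ℝ)) • (∑ k', S i k' ω) - S i k ω), neg_sub,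
              mul_pow, Real.norm_eq_abs, sq_abs]
          calc ∑ k, ‖T i k ω‖^2
              = η^2 * ∑ k, ‖S i k ω - (1/(K:ℝ)) • (∑ k', S i k' ω)‖^2 := by
                rw [Finset.mul_sum]; exact Finset.sum_congr rfl fun k _ => t1 k
            _ ≤ η^2 * ∑ k, ‖S i k ω‖^2 := by
                apply mul_le_mul_of_nonneg_left _ (sq_nonneg η)
                exact aux_var hKne (fun k => S i k ω)
            _ ≤ η^2 * ∑ k : Fin K, (M : ℝ) * ∑ m ∈ range M, ‖g i m k ω‖^2 := by
                apply mul_le_mul_of_nonneg_left _ (sq_nonneg η)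
                apply Finset.sum_le_sum
                intro k _
                have h1 : ‖S i k ω‖ ≤ ∑ m ∈ range M, ‖g i m k ω‖ := by
                  rw [hSdef]; exact norm_sum_le _ _
                have h2 : ‖S i k ω‖^2 ≤ (∑ m ∈ range M, ‖g i m k ω‖)^2 :=
                  pow_le_pow_left₀ (norm_nonneg _) h1 2
                have h3 := sq_sum_le_card_mul_sum_sq (s := range M)
                  (f := fun m => ‖g i m k ω‖)
                simp only [Finset.card_range] at h3
                calc ‖S i k ω‖^2 ≤ (∑ m ∈ range M, ‖g i m k ω‖)^2 := h2
                  _ ≤ (M:ℝ) * ∑ m ∈ range M, ‖g i m k ω‖^2 := h3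
            _ = η^2 * M * ∑ k, ∑ m ∈ range M, ‖g i m k ω‖^2 := by
                rw [← Finset.mul_sum, mul_assoc]
  have hdisp : ∀ k ω, ‖w (r+1) 0 k ω - w r M k ω‖^2 =
      (1-c)^2 * ‖w r M k ω - (1/(K:ℝ)) • ∑ k', w r M k' ω‖^2 := by
    intro k ω
    have hd := aux_disp (K := K) c (fun k' => w r M k' ω) k
    beta_reduce at hd
    rw [hmix r k ω, hd, norm_neg, norm_smul, mul_pow, Real.norm_eq_abs, sq_abs]
  have hDvI : ∀ k : Fin K, Integrable
      (fun ω => ‖w r M k ω - (1/(K:ℝ)) • ∑ k', w r M k' ω‖^2) μ := by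
    intro k
    have h := (hdispI k).const_mul (((1-c)^2)⁻¹)
    refine h.congr (Filter.Eventually.of_forall fun ω => ?_)
    beta_reduce
    rw [hdisp k ω, ← mul_assoc, inv_mul_cancel₀ (pow_ne_zero 2 (ne_of_gt h1c)), one_mul]
  have hDvsumI : Integrable
      (fun ω => ∑ k, ‖w r M k ω - (1/(K:ℝ)) • ∑ k', w r M k' ω‖^2) μ :=
    integrable_finset_sum _ fun k _ => hDvI k
  have hFI : ∀ i ∈ range (r+1),
      Integrable (fun ω => ∑ k : Fin K, ∑ m ∈ range M, ‖g i m k ω‖^2) μ := by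
    intro i hi
    have hir : i ≤ r := Nat.lt_succ_iff.mp (Finset.mem_range.mp hi)
    exact integrable_finset_sum _ fun k _ => integrable_finset_sum _
      fun m hm => hgI i hir m (Finset.mem_range.mp hm) k
  have hRHSI : Integrable (fun ω => A * ∑ i ∈ range (r+1), c^(r-i) *
      (η^2 * M * ∑ k, ∑ m ∈ range M, ‖g i m k ω‖^2)) μ := by
    apply Integrable.const_mul
    exact integrable_finset_sum _ fun i hi => ((hFI i hi).const_mul _).const_mul _
  have hRHSval : ∫ ω, (A * ∑ i ∈ range (r+1), c^(r-i) *
        (η^2 * M * ∑ k, ∑ m ∈ range M, ‖g i m k ω‖^2)) ∂μ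
      = A * ∑ i ∈ range (r+1), c^(r-i) *
        (η^2 * M * ∑ k : Fin K, ∑ m ∈ range M, ∫ ω, ‖g i m k ω‖^2 ∂μ) := by
    rw [integral_const_mul,
      integral_finset_sum _ (fun i hi => ((hFI i hi).const_mul _).const_mul _)]
    congr 1
    refine Finset.sum_congr rfl fun i hi => ?_
    rw [integral_const_mul, integral_const_mul]
    congr 1
    have hir : i ≤ r := Nat.lt_succ_iff.mp (Finset.mem_range.mp hi)
    rw [integral_finset_sum _ (fun k _ => integrable_finset_sum _
      fun m hm => hgI i hir m (Finset.mem_range.mp hm) k)]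
    congr 1
    refine Finset.sum_congr rfl fun k _ => ?_
    rw [integral_finset_sum _ (fun m hm => hgI i hir m (Finset.mem_range.mp hm) k)]
  have hFbound : ∀ i ∈ range (r+1),
      ∑ k : Fin K, ∑ m ∈ range M, ∫ ω, ‖g i m k ω‖^2 ∂μ
        ≤ (M:ℝ) * ((K:ℝ) * (2*(G^2+σ^2))) := by
    intro i hi
    have hir : i ≤ r := Nat.lt_succ_iff.mp (Finset.mem_range.mp hi)
    rw [Finset.sum_comm]
    calc ∑ m ∈ range M, ∑ k : Fin K, ∫ ω, ‖g i m k ω‖^2 ∂μ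
        ≤ ∑ m ∈ range M, (K:ℝ)*(2*(G^2+σ^2)) := by
          refine Finset.sum_le_sum fun m hm => ?_
          have hb := hbound i hir m (Finset.mem_range.mp hm)
          have h := mul_le_mul_of_nonneg_left hb hK0.le
          rw [← mul_assoc, mul_one_div, div_self hKne, one_mul] at h
          exact h
      _ = (M:ℝ) * ((K:ℝ)*(2*(G^2+σ^2))) := by
          rw [Finset.sum_const, Finset.card_range, nsmul_eq_mul]
  have Ibound : ∫ ω, (∑ k, ‖w r M k ω - (1/(K:ℝ)) • ∑ k', w r M k' ω‖^2) ∂μ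
      ≤ A * (A * (η^2 * M * ((M:ℝ) * ((K:ℝ) * (2*(G^2+σ^2)))))) := by
    refine (integral_mono hDvsumI hRHSI hpt).trans ?_
    rw [hRHSval]
    have hη2M : (0:ℝ) ≤ η^2 * M := by positivity
    calc A * ∑ i ∈ range (r+1), c^(r-i) *
          (η^2 * M * ∑ k : Fin K, ∑ m ∈ range M, ∫ ω, ‖g i m k ω‖^2 ∂μ)
        ≤ A * ∑ i ∈ range (r+1), c^(r-i) *
          (η^2 * M * ((M:ℝ) * ((K:ℝ) * (2*(G^2+σ^2))))) := by
          refine mul_le_mul_of_nonneg_left (Finset.sum_le_sum fun i hi => ?_) hAnn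
          exact mul_le_mul_of_nonneg_left
            (mul_le_mul_of_nonneg_left (hFbound i hi) hη2M) (pow_nonneg hc0 _)
      _ = A * (A * (η^2 * M * ((M:ℝ) * ((K:ℝ) * (2*(G^2+σ^2)))))) := by
          rw [← Finset.sum_mul, hArefl]
  have hLHS : ∑ k : Fin K, ∫ ω, ‖w (r+1) 0 k ω - w r M k ω‖^2 ∂μ =
      (1-c)^2 * ∫ ω, (∑ k, ‖w r M k ω - (1/(K:ℝ)) • ∑ k', w r M k' ω‖^2) ∂μ := by
    rw [integral_finset_sum _ fun k _ => hDvI k, Finset.mul_sum]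
    refine Finset.sum_congr rfl fun k _ => ?_
    rw [← integral_const_mul]
    refine integral_congr_ae (Filter.Eventually.of_forall fun ω => ?_)
    exact hdisp k ω
  have hfinal : (1/(K:ℝ)) * ((1-c)^2 *
      (A * (A * (η^2 * M * ((M:ℝ) * ((K:ℝ) * (2*(G^2+σ^2)))))))) =
      (1 - c^(r+1))^2 * (2*(M:ℝ)^2*(G^2+σ^2)*η^2) := by
    rw [← hgeom]
    field_simp
  calc (1/(K:ℝ)) * ∑ k, ∫ ω, ‖w (r+1) 0 k ω - w r M k ω‖^2 ∂μ
      = (1/(K:ℝ)) * ((1-c)^2 *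
          ∫ ω, (∑ k, ‖w r M k ω - (1/(K:ℝ)) • ∑ k', w r M k' ω‖^2) ∂μ) := by
        rw [hLHS]
    _ ≤ (1/(K:ℝ)) * ((1-c)^2 *
          (A * (A * (η^2 * M * ((M:ℝ) * ((K:ℝ) * (2*(G^2+σ^2)))))))) := by
        refine mul_le_mul_of_nonneg_left (mul_le_mul_of_nonneg_left Ibound ?_) ?_
        · positivity
        · positivity
    _ = (1 - c^(r+1))^2 * (2*(M:ℝ)^2*(G^2+σ^2)*η^2) := hfinal
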